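/- Let b ≥ 2 be an integer, let h : ℝ → [0,1] be a measurable seed function, let a > 0, and let X be a random variable whose law has density f with respect to Lebesgue measure, where f(x) = ( h(log_b x) − h(log_b x − 1) ) / (x ln b) for x > 0 and f(x) = 0 otherwise. Define the shifted seed function h̃(v) := h(v − log_b a). Then h̃ is a seed function, and the law of aX has density x ↦ ( h̃(log_b x) − h̃(log_b x − 1) ) / (x ln b) for x > 0 (and 0 for x ≤ 0) with respect to Lebesgue measure. -/
import Mathlib


open MeasureTheory Filter

lemma withDensity_map_equiv_aux {α β : Type*} [MeasurableSpace α] [MeasurableSpace β]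
    (μ : Measure α) (e : α ≃ᵐ β) (f : α → ENNReal) (hf : Measurable f) :
    (μ.withDensity f).map e = (μ.map e).withDensity (fun y => f (e.symm y)) := by
  ext s hs
  rw [Measure.map_apply e.measurable hs, withDensity_apply _ (e.measurable hs),
    withDensity_apply _ hs, Measure.restrict_map e.measurable hs]
  have h2 := lintegral_map (μ := μ.restrict (⇑e ⁻¹' s)) (hf.comp e.symm.measurable) e.measurable
  simp only [Function.comp, MeasurableEquiv.symm_apply_apply] at h2
  exact h2.symm

/-- Shift property: if `X` has the pdf produced by a seed function `h`, then
`aX` has the pdf produced by the shifted seed function `h̃(v) = h(v − log_b a)`,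
which is again a seed function. -/
theorem shifted_seed_function_generates_scaled_rv
    {Ω : Type*} [MeasurableSpace Ω] (ℙ : Measure Ω) [IsProbabilityMeasure ℙ]
    (b : ℕ) (hb : 2 ≤ b)
    (h : ℝ → ℝ) (hmeas : Measurable h)
    (hrange : ∀ v, h v ∈ Set.Icc (0 : ℝ) 1)
    (hmono : ∀ v, h v ≤ h (v + 1))
    (hbot : Tendsto h atBot (nhds 0))
    (htop : Tendsto h atTop (nhds 1))
    (a : ℝ) (ha : 0 < a)
    (X : Ω → ℝ) (hX : Measurable X)
    (hlaw : Measure.map X ℙ = volume.withDensity (fun x => ENNReal.ofReal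
      (if 0 < x then (h (Real.logb b x) - h (Real.logb b x - 1)) / (x * Real.log b) else 0))) :
    ((∀ v, h (v - Real.logb b a) ∈ Set.Icc (0 : ℝ) 1) ∧
     (∀ v, h (v - Real.logb b a) ≤ h (v + 1 - Real.logb b a)) ∧
     Tendsto (fun v => h (v - Real.logb b a)) atBot (nhds 0) ∧
     Tendsto (fun v => h (v - Real.logb b a)) atTop (nhds 1)) ∧
    Measure.map (fun ω => a * X ω) ℙ = volume.withDensity (fun x => ENNReal.ofReal
      (if 0 < x then
        (h (Real.logb b x - Real.logb b a) - h (Real.logb b x - 1 - Real.logb b a))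
          / (x * Real.log b)
      else 0)) := by
  set c := Real.logb b a with hc
  refine ⟨⟨fun v => hrange _, fun v => ?_, ?_, ?_⟩, ?_⟩
  · have := hmono (v - c)
    rwa [sub_add_eq_add_sub] at this
  · have : Tendsto (fun v : ℝ => v - c) atBot atBot := tendsto_atBot_add_const_right _ _ tendsto_id
    exact hbot.comp this
  · have : Tendsto (fun v : ℝ => v - c) atTop atTop := tendsto_atTop_add_const_right _ _ tendsto_id
    exact htop.comp this
  · -- the density part
    have hlogb : Measurable (Real.logb b) := Real.measurable_log.div_const _
    have hf : Measurable (fun x : ℝ => ENNReal.ofReal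
        (if 0 < x then (h (Real.logb b x) - h (Real.logb b x - 1)) / (x * Real.log b) else 0)) := by
      refine ENNReal.measurable_ofReal.comp (Measurable.ite measurableSet_Ioi ?_ measurable_const)
      exact ((hmeas.comp hlogb).sub (hmeas.comp (hlogb.sub measurable_const))).div
        (measurable_id.mul measurable_const)
    set e : ℝ ≃ᵐ ℝ := (Homeomorph.mulLeft₀ a ha.ne').toMeasurableEquiv with he
    have hecoe : ⇑e = (a * ·) := rfl
    have hesymm : ∀ y, e.symm y = a⁻¹ * y := fun y => rfl
    have h1 : Measure.map (fun ω => a * X ω) ℙ = Measure.map e (Measure.map X ℙ) := by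
      rw [hecoe, Measure.map_map (measurable_const_mul a) hX]; rfl
    rw [h1, hlaw, withDensity_map_equiv_aux _ _ _ hf, hecoe,
      Real.map_volume_mul_left ha.ne']
    have hg1 : Measurable (fun y : ℝ => ENNReal.ofReal (if 0 < e.symm y then
        (h (Real.logb b (e.symm y)) - h (Real.logb b (e.symm y) - 1))
          / (e.symm y * Real.log b) else 0)) := hf.comp e.symm.measurable
    rw [withDensity_smul_measure, ← withDensity_smul _ hg1]
    congr 1
    funext x
    simp only [Pi.smul_apply, smul_eq_mul, hesymm]
    have hiff : (0 < a⁻¹ * x) ↔ 0 < x := by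
      constructor
      · intro hx; nlinarith [inv_pos.mpr ha]
      · intro hx; positivity
    by_cases hx : 0 < x
    · rw [if_pos (hiff.mpr hx), if_pos hx, abs_of_pos (inv_pos.mpr ha),
        ← ENNReal.ofReal_mul (inv_pos.mpr ha).le]
      congr 1
      have e1 : Real.logb b (a⁻¹ * x) = Real.logb b x - c := by
        rw [Real.logb_mul (inv_ne_zero ha.ne') hx.ne', Real.logb_inv]; ring
      rw [e1, show Real.logb b x - c - 1 = Real.logb b x - 1 - c by ring,
        show (a⁻¹ * x) * Real.log b = a⁻¹ * (x * Real.log b) by ring,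
        ← mul_div_assoc, mul_div_mul_left _ _ (inv_ne_zero ha.ne')]
    · rw [if_neg (fun hh => hx (hiff.mp hh)), if_neg hx, ENNReal.ofReal_zero, mul_zero]
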